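/- Let n be odd, G the dihedral group of order 2n acting on ZMod n by (r j)·i = i + j and (sr j)·i = j − i, and R = MonoidAlgebra ℤ G the integral group ring. Let ℤ[ZMod n] be the associated permutation R-module (finitely supported functions ZMod n → ℤ with G permuting coordinates by the above action), let ε : ℤ[ZMod n] → ℤ be the augmentation map f ↦ ∑_i f(i) onto ℤ with trivial G-action (an R-module map), and let K = ker ε, an R-module. If M is an R-module on which multiplication by 2n is bijective, then for every i ≥ 1 the abelian group Ext^i_R(K, M) is zero. -/

import Mathlib

open CategoryTheory

/-- The action of the dihedral group `D_n` on `ZMod n`: the rotation `r j` sends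
`i` to `i + j` and the reflection `sr j` sends `i` to `j - i`. -/
def dmove (n : ℕ) : DihedralGroup n → ZMod n → ZMod n
  | DihedralGroup.r j, i => i + j
  | DihedralGroup.sr j, i => j - i

lemma dmove_one (n : ℕ) (i : ZMod n) : dmove n 1 i = i := by
  rw [DihedralGroup.one_def]; simp [dmove]

lemma dmove_mul (n : ℕ) (g h : DihedralGroup n) (i : ZMod n) :
    dmove n (g * h) i = dmove n h (dmove n g i) := by
  cases g <;> cases h <;>
    simp only [DihedralGroup.r_mul_r, DihedralGroup.r_mul_sr, DihedralGroup.sr_mul_r,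
      DihedralGroup.sr_mul_sr, dmove] <;> ring

/-- The permutation of `ZMod n` given by an element of `D_n`. -/
def dperm (n : ℕ) (g : DihedralGroup n) : ZMod n ≃ ZMod n where
  toFun := dmove n g
  invFun := dmove n g⁻¹
  left_inv i := by rw [← dmove_mul, mul_inv_cancel, dmove_one]
  right_inv i := by rw [← dmove_mul, inv_mul_cancel, dmove_one]

/-- The permutation representation `ℤ[ZMod n]` of `D_n` over `ℤ`: the group element
`g` sends the basis vector at `i` to the basis vector at `g·i`; equivalently
`(g • f) i = f (g⁻¹ · i)` (with Mathlib's `DihedralGroup` multiplication, which is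
the reverse of the geometric composition of the maps `dmove`, the inverse `g⁻¹`
corresponds to precomposition with `dmove n g`). -/
noncomputable def drep (n : ℕ) : Representation ℤ (DihedralGroup n) (ZMod n →₀ ℤ) where
  toFun g := (Finsupp.domLCongr (dperm n g).symm).toLinearMap
  map_one' := by
    apply LinearMap.ext; intro f; apply Finsupp.ext; intro i
    beta_reduce
    rw [LinearEquiv.coe_coe, Finsupp.domLCongr_apply, Finsupp.domCongr_apply,
      Finsupp.equivMapDomain_apply, Equiv.symm_symm, Module.End.one_apply]
    show f (dmove n 1 i) = f i
    rw [dmove_one]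
  map_mul' g h := by
    apply LinearMap.ext; intro f; apply Finsupp.ext; intro i
    beta_reduce
    rw [Module.End.mul_apply]
    repeat rw [LinearEquiv.coe_coe, Finsupp.domLCongr_apply, Finsupp.domCongr_apply,
      Finsupp.equivMapDomain_apply, Equiv.symm_symm]
    show f (dmove n (g * h) i) = f (dmove n h (dmove n g i))
    rw [dmove_mul]

/-- The permutation module `ℤ[ZMod n]` as an object of `Rep ℤ D_n`. -/
noncomputable def permRep (n : ℕ) : Rep ℤ (DihedralGroup n) := Rep.of (drep n)

/-- The augmentation, sending `f : ZMod n →₀ ℤ` to the sum of its values, as a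
morphism to the trivial representation `ℤ`. -/
noncomputable def aug (n : ℕ) : permRep n ⟶ Rep.trivial ℤ (DihedralGroup n) ℤ :=
  Rep.ofHom (ρ := drep n) (σ := Representation.trivial ℤ (DihedralGroup n) ℤ) {
  toLinearMap := Finsupp.linearCombination ℤ fun _ : ZMod n => (1 : ℤ)
  isIntertwining' g := by
    apply LinearMap.ext; intro f
    show Finsupp.linearCombination ℤ (fun _ : ZMod n => (1 : ℤ))
        (Finsupp.equivMapDomain (dperm n g).symm f) =
      Finsupp.linearCombination ℤ (fun _ : ZMod n => (1 : ℤ)) f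
    rw [Finsupp.equivMapDomain_eq_mapDomain, Finsupp.linearCombination_mapDomain]
    rfl }

/-- The augmentation ideal-like kernel `K = ker ε`, as a module over the integral
group ring `R = MonoidAlgebra ℤ D_n`, i.e. as an object of `ModuleCat R`, obtained
by transporting the representations along the equivalence
`Rep ℤ D_n ≌ ModuleCat (MonoidAlgebra ℤ D_n)` and taking the kernel. -/
noncomputable def augKernel (n : ℕ) :
    ModuleCat (MonoidAlgebra ℤ (DihedralGroup n)) :=
  CategoryTheory.Limits.kernel
    ((Rep.equivalenceModuleMonoidAlgebra (k := ℤ) (G := DihedralGroup n)).functor.map (aug n))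


set_option linter.unusedSectionVars false
set_option maxHeartbeats 1600000
set_option synthInstance.maxHeartbeats 400000

variable {G : Type} [Group G] [Fintype G]
abbrev RG (G : Type) [Group G] := MonoidAlgebra ℤ G

noncomputable instance : Module.Free ℤ (RG G) := by unfold RG; exact Module.Free.of_equiv (MonoidAlgebra.coeffLinearEquiv (R := ℤ) (S := ℤ) (M := G)).symm
instance : Module.Finite ℤ (RG G) :=
  Module.Finite.equiv ((Finsupp.linearEquivFunOnFinite ℤ ℤ G).symm.trans (MonoidAlgebra.coeffLinearEquiv (R := ℤ) (S := ℤ) (M := G)).symm)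


lemma sub_finite {V : ModuleCat.{0} (RG G)} (hfin : Module.Finite ℤ V)
    (p : Submodule (RG G) V) : Module.Finite ℤ ↥p := by
  haveI := hfin
  haveI : IsNoetherian ℤ V := isNoetherian_of_isNoetherianRing_of_finite ℤ V
  exact Module.Finite.iff_fg.mpr (IsNoetherian.noetherian (p.restrictScalars ℤ))

lemma sub_free {V : ModuleCat.{0} (RG G)} (hfin : Module.Finite ℤ V) (hfree : Module.Free ℤ V)
    (p : Submodule (RG G) V) : Module.Free ℤ ↥p := by
  haveI := hfin; haveI := hfree
  haveI : Module.Finite ℤ ↥p := sub_finite hfin p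
  haveI : NoZeroSMulDivisors ℤ ↥p := by
    constructor
    intro c x h
    have : c • (x : V) = 0 := by
      have := congrArg (Subtype.val) h
      simpa using this
    rcases smul_eq_zero.mp this with h1 | h2
    · exact Or.inl h1
    · exact Or.inr (by ext; simpa using h2)
  exact Module.free_of_finite_type_torsion_free'

lemma sub_projective {V : ModuleCat.{0} (RG G)} (hfin : Module.Finite ℤ V) (hfree : Module.Free ℤ V)
    (p : Submodule (RG G) V) : Module.Projective ℤ ↥p := by
  haveI : Module.Free ℤ ↥p := sub_free hfin hfree p
  exact Module.Projective.of_free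

lemma avg_lemma {B P M : ModuleCat.{0} (RG G)} (d₁ : B ⟶ P) (f : B ⟶ M)
    (u : M ≃ₗ[RG G] M) (hu : ∀ x : M, u x = (Fintype.card G : ℤ) • x)
    (g₀ : P →ₗ[ℤ] M) (hg₀ : ∀ x : B, g₀ (d₁ x) = f x) :
    ∃ g : P ⟶ M, ∀ x : B, g (d₁ x) = f x := by
  refine ⟨ModuleCat.ofHom ((u.symm.toLinearMap).comp (g₀.sumOfConjugatesEquivariant G)), fun x => ?_⟩
  have key : (g₀.sumOfConjugatesEquivariant G) (d₁ x) = (Fintype.card G : ℤ) • f x := by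
    rw [LinearMap.sumOfConjugatesEquivariant_apply]
    have : ∀ g : G, g₀.conjugate g (d₁ x) = f x := by
      intro g
      rw [LinearMap.conjugate_apply, ← map_smul d₁.hom, hg₀, ← map_smul f.hom, ← mul_smul,
        MonoidAlgebra.single_mul_single, mul_one, inv_mul_cancel, ← MonoidAlgebra.one_def,
        one_smul]
    rw [Finset.sum_congr rfl (fun g _ => this g), Finset.sum_const, Finset.card_univ,
      ← Nat.cast_smul_eq_nsmul ℤ]
  show u.symm _ = f x
  rw [key, ← hu, LinearEquiv.symm_apply_apply]

lemma g0_lemma {B P W M : ModuleCat.{0} (RG G)} (d₁ : B ⟶ P) (f : B ⟶ M) (q : P ⟶ W)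
    (hker : ∀ x : B, d₁ x = 0 → f x = 0)
    (hqd : ∀ x : P, q x = 0 ↔ ∃ b : B, d₁ b = x)
    (hproj : Module.Projective ℤ ↥(LinearMap.range q.hom)) :
    ∃ g₀ : P →ₗ[ℤ] M, ∀ x : B, g₀ (d₁ x) = f x := by
  classical
  haveI := hproj
  let q' : P →ₗ[ℤ] ↥(LinearMap.range q.hom) :=
    (q.hom.rangeRestrict).restrictScalars ℤ
  have hq' : Function.Surjective q' := fun y => LinearMap.surjective_rangeRestrict q.hom y
  obtain ⟨s, hs⟩ := Module.projective_lifting_property q' (LinearMap.id) hq'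
  have hr : ∀ x : P, x - s (q' x) ∈ LinearMap.range d₁.hom := by
    intro x
    refine (hqd _).mp ?_
    have h0 : q' (x - s (q' x)) = 0 := by
      rw [map_sub]
      have : q' (s (q' x)) = q' x := LinearMap.congr_fun hs (q' x)
      rw [this, sub_self]
    have := congrArg (Subtype.val) h0
    simpa [q'] using this
  have hle : LinearMap.ker d₁.hom ≤ LinearMap.ker f.hom := fun x hx => hker x hx
  let fbar : ↥(LinearMap.range d₁.hom) →ₗ[RG G] M :=
    (Submodule.liftQ (LinearMap.ker d₁.hom) f.hom hle).comp
      (d₁.hom.quotKerEquivRange.symm : ↥(LinearMap.range d₁.hom) ≃ₗ[RG G] B ⧸ LinearMap.ker d₁.hom).toLinearMap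
  have fbar_spec : ∀ (b : B) (h : d₁ b ∈ LinearMap.range d₁.hom), fbar ⟨d₁ b, h⟩ = f b := by
    intro b h
    have h1 : d₁.hom.quotKerEquivRange.symm ⟨d₁ b, h⟩ = Submodule.Quotient.mk b := by
      rw [LinearEquiv.symm_apply_eq]
      ext
      exact (LinearMap.quotKerEquivRange_apply_mk d₁.hom b).symm
    show (Submodule.liftQ (LinearMap.ker d₁.hom) f.hom hle) (d₁.hom.quotKerEquivRange.symm ⟨d₁ b, h⟩) = f b
    rw [h1, Submodule.liftQ_apply]
  let r : P →ₗ[ℤ] ↥(LinearMap.range d₁.hom) :=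
    LinearMap.codRestrict ((LinearMap.range d₁.hom).restrictScalars ℤ)
      (LinearMap.id - s.comp q') hr
  refine ⟨(fbar.restrictScalars ℤ).comp r, fun x => ?_⟩
  have hq0 : q' (d₁ x) = 0 := by
    ext
    show q (d₁ x) = 0
    exact (hqd _).mpr ⟨x, rfl⟩
  have hrd : ((r (d₁ x)) : P) = d₁ x := by
    show d₁ x - s (q' (d₁ x)) = d₁ x
    rw [hq0, map_zero, sub_zero]
  show fbar (r (d₁ x)) = f x
  have : r (d₁ x) = ⟨d₁ x, ⟨x, rfl⟩⟩ := Subtype.ext hrd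
  rw [this]
  exact fbar_spec x _

/-- data of one step of a resolution -/
structure Tw (G : Type) [Group G] where
  Y : ModuleCat.{0} (RG G)
  P : ModuleCat.{0} (RG G)
  c : P ⟶ Y
  hc : Function.Surjective c
  hYfin : Module.Finite ℤ Y
  hPfin : Module.Finite ℤ P
  hPfree : Module.Free ℤ P
  hPproj : Projective P

noncomputable def twStep (Y : ModuleCat.{0} (RG G)) (hY : Module.Finite ℤ Y) : Tw G := by
  haveI := hY
  haveI : Module.Finite (RG G) Y := Module.Finite.of_restrictScalars_finite ℤ (RG G) Y
  have e := Module.Finite.exists_fin' (RG G) Y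
  exact
  { Y := Y
    P := ModuleCat.of (RG G) (Fin e.choose → RG G)
    c := ModuleCat.ofHom e.choose_spec.choose
    hc := e.choose_spec.choose_spec
    hYfin := hY
    hPfin := inferInstanceAs (Module.Finite ℤ (Fin e.choose → RG G))
    hPfree := inferInstanceAs (Module.Free ℤ (Fin e.choose → RG G))
    hPproj := ModuleCat.projective_of_free (Pi.basisFun (RG G) (Fin e.choose)) }

@[simp] lemma twStep_Y (Y : ModuleCat.{0} (RG G)) (hY : Module.Finite ℤ Y) : (twStep Y hY).Y = Y := rfl

lemma ker_fin {P Y : ModuleCat.{0} (RG G)} (hP : Module.Finite ℤ P) (c : P ⟶ Y) :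
    Module.Finite ℤ ↥(LinearMap.ker c.hom) := by
  haveI := hP
  haveI : IsNoetherian ℤ P := isNoetherian_of_isNoetherianRing_of_finite ℤ P
  exact Module.Finite.iff_fg.mpr (IsNoetherian.noetherian ((LinearMap.ker c.hom).restrictScalars ℤ))

noncomputable def twNext (T : Tw G) : Tw G :=
  twStep (ModuleCat.of (RG G) ↥(LinearMap.ker T.c.hom)) (ker_fin T.hPfin T.c)

noncomputable def tw (X : ModuleCat.{0} (RG G)) (hX : Module.Finite ℤ X) : ℕ → Tw G
  | 0 => twStep X hX
  | n + 1 => twNext (tw X hX n)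

variable (X : ModuleCat.{0} (RG G)) (hX : Module.Finite ℤ X)

/-- the cover map of stage `n+1`, retyped with definitionally-equal target -/
noncomputable def twC (n : ℕ) :
    (tw X hX (n + 1)).P →ₗ[RG G] ↥(LinearMap.ker (tw X hX n).c.hom) :=
  (tw X hX (n + 1)).c.hom

lemma twC_surj (n : ℕ) : Function.Surjective (twC X hX n) :=
  (tw X hX (n + 1)).hc

noncomputable def twD (n : ℕ) : (tw X hX (n + 1)).P ⟶ (tw X hX n).P :=
  ModuleCat.ofHom (((LinearMap.ker (tw X hX n).c.hom).subtype).comp (twC X hX n))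

lemma twD_apply (n : ℕ) (x : (tw X hX (n + 1)).P) :
    twD X hX n x = ((twC X hX n x : ↥(LinearMap.ker (tw X hX n).c.hom)) : (tw X hX n).P) := rfl

lemma twD_mem (n : ℕ) (x : (tw X hX (n + 1)).P) :
    twD X hX n x ∈ LinearMap.ker (tw X hX n).c.hom := (twC X hX n x).2

lemma twC_eq_c (n : ℕ) (x : (tw X hX (n + 1)).P) (h) :
    (tw X hX (n + 1)).c x = (⟨twD X hX n x, h⟩ : ↥(LinearMap.ker (tw X hX n).c.hom)) := by
  apply Subtype.ext (p := fun z => z ∈ LinearMap.ker (tw X hX n).c.hom)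
  rfl

lemma twD_sq (n : ℕ) : twD X hX (n + 1) ≫ twD X hX n = 0 := by
  ext x
  show twD X hX n (twD X hX (n+1) x) = 0
  rw [twD_apply]
  have h1 : twC X hX n (twD X hX (n+1) x) = 0 := by
    have : (tw X hX (n + 1)).c (twD X hX (n+1) x) = 0 := twD_mem X hX (n+1) x
    exact this
  rw [h1]
  rfl

lemma twD_exact (n : ℕ) (x : (tw X hX (n + 1)).P) (h : twD X hX n x = 0) :
    ∃ y, twD X hX (n + 1) y = x := by
  have hx : x ∈ LinearMap.ker (tw X hX (n + 1)).c.hom := by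
    show (tw X hX (n+1)).c x = 0
    rw [twC_eq_c X hX n x (twD_mem X hX n x)]
    exact Subtype.ext (p := fun z => z ∈ LinearMap.ker (tw X hX n).c.hom) h
  obtain ⟨y, hy⟩ := twC_surj X hX (n + 1) ⟨x, hx⟩
  exact ⟨y, by rw [twD_apply, hy]⟩

lemma twC_exact (x : (tw X hX 0).P) (h : (tw X hX 0).c x = 0) :
    ∃ y, twD X hX 0 y = x := by
  obtain ⟨y, hy⟩ := twC_surj X hX 0 ⟨x, h⟩
  exact ⟨y, by rw [twD_apply, hy]⟩

noncomputable def twCplx : ChainComplex (ModuleCat.{0} (RG G)) ℕ :=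
  ChainComplex.of (fun n => (tw X hX n).P) (twD X hX) (twD_sq X hX)

@[simp] lemma twCplx_X (n : ℕ) : (twCplx X hX).X n = (tw X hX n).P := rfl

lemma twCplx_d (n : ℕ) : (twCplx X hX).d (n + 1) n = twD X hX n :=
  ChainComplex.of_d (fun n => (tw X hX n).P) (twD X hX) n

lemma twCplx_d10 : (twCplx X hX).d 1 0 = twD X hX 0 := twCplx_d X hX 0

lemma twD_comp_c : (twCplx X hX).d 1 0 ≫ (tw X hX 0).c = 0 := by
  rw [twCplx_d10]
  ext x
  exact twD_mem X hX 0 x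

noncomputable def twRes : ProjectiveResolution X where
  complex := twCplx X hX
  projective := fun n => (tw X hX n).hPproj
  π := (ChainComplex.toSingle₀Equiv (twCplx X hX) X).symm
        ⟨(tw X hX 0).c, twD_comp_c X hX⟩
  quasiIso := ⟨fun n => by
    have hπ0 : ((ChainComplex.toSingle₀Equiv (twCplx X hX) X).symm
        ⟨(tw X hX 0).c, twD_comp_c X hX⟩).f 0 = (tw X hX 0).c :=
      ChainComplex.toSingle₀Equiv_symm_apply_f_zero _ _
    cases n with
    | zero =>
      rw [ChainComplex.quasiIsoAt₀_iff, ShortComplex.quasiIso_iff_of_zeros']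
      · constructor
        · rw [ShortComplex.moduleCat_exact_iff]
          intro x hx
          dsimp at hx ⊢
          have hx' : (tw X hX 0).c x = 0 :=
            (DFunLike.congr_fun (congrArg ModuleCat.Hom.hom hπ0) x).symm.trans hx
          obtain ⟨y, hy⟩ := twC_exact X hX x hx'
          refine ⟨y, ?_⟩
          exact (DFunLike.congr_fun (congrArg ModuleCat.Hom.hom (twCplx_d X hX 0)) y).trans hy
        · dsimp
          refine ConcreteCategory.epi_of_surjective _ (fun y => ?_)
          obtain ⟨z, hz⟩ := (tw X hX 0).hc y
          exact ⟨z, (DFunLike.congr_fun (congrArg ModuleCat.Hom.hom hπ0) z).trans hz⟩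
      all_goals rfl
    | succ n =>
      rw [quasiIsoAt_iff_exactAt']
      · rw [HomologicalComplex.exactAt_iff' _ (n + 2) (n + 1) n (by simp) (by simp),
          ShortComplex.moduleCat_exact_iff]
        intro x hx
        dsimp at hx ⊢
        have hx' : twD X hX n x = 0 :=
          (DFunLike.congr_fun (congrArg ModuleCat.Hom.hom (twCplx_d X hX n)) x).symm.trans hx
        obtain ⟨y, hy⟩ := twD_exact X hX n x hx'
        exact ⟨y, (DFunLike.congr_fun (congrArg ModuleCat.Hom.hom (twCplx_d X hX (n+1))) y).trans hy⟩
      · apply ChainComplex.exactAt_succ_single_obj⟩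

lemma isZero_subsingleton {Z : ModuleCat.{0} ℤ} (h : Limits.IsZero Z) : Subsingleton Z := by
  constructor
  intro a b
  have h0 : (𝟙 Z : Z ⟶ Z) = 0 := h.eq_of_src _ _
  have ha : a = (𝟙 Z : Z ⟶ Z) a := rfl
  have hb : b = (𝟙 Z : Z ⟶ Z) b := rfl
  rw [ha, hb, h0]
  rfl

include hX in
theorem tw_vanish (hXfree : Module.Free ℤ X) (M : ModuleCat.{0} (RG G))
    (u : M ≃ₗ[RG G] M) (hu : ∀ x : M, u x = (Fintype.card G : ℤ) • x) (m : ℕ) :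
    Subsingleton (((Ext ℤ (ModuleCat.{0} (RG G)) (m + 1)).obj (Opposite.op X)).obj M) := by
  have h : Limits.IsZero
      (HomologicalComplex.homology ((twCplx X hX).linearYonedaObj ℤ M) (m + 1)) := by
    rw [← HomologicalComplex.exactAt_iff_isZero_homology,
      HomologicalComplex.exactAt_iff' _ m (m + 1) (m + 2) (by simp) (by simp),
      ShortComplex.moduleCat_exact_iff]
    intro f hf
    let fm : (tw X hX (m + 1)).P ⟶ M := f
    have hfm : ((twCplx X hX).linearYonedaObj ℤ M).d (m + 1) (m + 2) fm = 0 := hf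
    have hf' : ∀ a : (tw X hX (m + 2)).P, fm (twD X hX (m + 1) a) = 0 := by
      intro a
      have h1 : ((twCplx X hX).linearYonedaObj ℤ M).d (m + 1) (m + 2) fm
          = (twCplx X hX).d (m + 2) (m + 1) ≫ fm := by
        rw [ChainComplex.linearYonedaObj_d]
        rfl
      have h2 : (twCplx X hX).d (m + 2) (m + 1) ≫ fm = 0 := h1.symm.trans hfm
      have h3 := DFunLike.congr_fun (congrArg ModuleCat.Hom.hom h2) a
      rw [twCplx_d X hX (m + 1)] at h3
      exact h3
    have hker : ∀ x : (tw X hX (m + 1)).P, twD X hX m x = 0 → fm x = 0 := by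
      intro x hx
      obtain ⟨y, hy⟩ := twD_exact X hX m x hx
      rw [← hy]
      exact hf' y
    have hg₀ : ∃ g₀ : (tw X hX m).P →ₗ[ℤ] M, ∀ x : (tw X hX (m + 1)).P,
        g₀ (twD X hX m x) = fm x := by
      cases m with
      | zero =>
        refine g0_lemma (twD X hX 0) fm ((tw X hX 0).c) hker (fun x => ?_) ?_
        · constructor
          · exact twC_exact X hX x
          · rintro ⟨b, rfl⟩
            exact twD_mem X hX 0 b
        · haveI h1 : Module.Finite ℤ (tw X hX 0).Y := hX
          haveI h2 : Module.Free ℤ (tw X hX 0).Y := hXfree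
          exact sub_projective h1 h2 _
      | succ k =>
        refine g0_lemma (twD X hX (k + 1)) fm (twD X hX k) hker (fun x => ?_) ?_
        · constructor
          · exact twD_exact X hX k x
          · rintro ⟨b, rfl⟩
            have := DFunLike.congr_fun (congrArg ModuleCat.Hom.hom (twD_sq X hX k)) b
            simpa using this
        · exact sub_projective (tw X hX k).hPfin (tw X hX k).hPfree _
    obtain ⟨g₀, hg₀⟩ := hg₀
    obtain ⟨g, hg⟩ := avg_lemma (twD X hX m) fm u hu g₀ hg₀
    refine ⟨g, ?_⟩
    have final : ((twCplx X hX).linearYonedaObj ℤ M).d m (m + 1) g = fm := by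
      have heq : ((twCplx X hX).linearYonedaObj ℤ M).d m (m + 1) g
          = (twCplx X hX).d (m + 1) m ≫ g := by
        rw [ChainComplex.linearYonedaObj_d]
        rfl
      rw [heq, twCplx_d X hX m]
      exact ModuleCat.hom_ext (LinearMap.ext (fun x => hg x))
    exact final
  exact isZero_subsingleton (h.of_iso ((twRes X hX).isoExt (m + 1) M))




section Final

variable (n : ℕ)

lemma neZero_of_odd (hodd : Odd n) : NeZero n := by
  constructor
  rintro rfl
  exact (Nat.not_odd_iff_even.mpr Even.zero) hodd

theorem stmt16 (n : ℕ) (hodd : Odd n)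
    (M : ModuleCat (MonoidAlgebra ℤ (DihedralGroup n)))
    (h2n : Function.Bijective fun x : M => ((2 * n : ℕ) : ℤ) • x) :
    ∀ i : ℕ, 1 ≤ i →
      Subsingleton (((Ext ℤ (ModuleCat (MonoidAlgebra ℤ (DihedralGroup n))) i).obj
        (Opposite.op (augKernel n))).obj M) := by
  intro i hi
  obtain ⟨m, rfl⟩ : ∃ m, i = m + 1 := ⟨i - 1, (Nat.succ_pred_eq_of_pos hi).symm⟩
  haveI : NeZero n := neZero_of_odd n hodd
  -- the multiplication-by-2n equivalence
  let zmap : M →ₗ[MonoidAlgebra ℤ (DihedralGroup n)] M :=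
    { toFun := fun x => ((2 * n : ℕ) : ℤ) • x
      map_add' := fun x y => smul_add _ x y
      map_smul' := fun r x => smul_comm _ r x }
  let u : M ≃ₗ[MonoidAlgebra ℤ (DihedralGroup n)] M := LinearEquiv.ofBijective zmap h2n
  have hu : ∀ x : M, u x = (Fintype.card (DihedralGroup n) : ℤ) • x := by
    intro x
    show ((2 * n : ℕ) : ℤ) • x = (Fintype.card (DihedralGroup n) : ℤ) • x
    rw [DihedralGroup.card]
  -- Z-module instances on the kernel
  let φ := (Rep.equivalenceModuleMonoidAlgebra (k := ℤ)
    (G := DihedralGroup n)).functor.map (aug n)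
  have ae : ((Rep.equivalenceModuleMonoidAlgebra (k := ℤ)
      (G := DihedralGroup n)).functor.obj (permRep n) : Type) ≃+ (ZMod n →₀ ℤ) :=
    (permRep n).ρ.asModuleEquiv.toAddEquiv
  haveI hSfin : Module.Finite ℤ ((Rep.equivalenceModuleMonoidAlgebra (k := ℤ)
      (G := DihedralGroup n)).functor.obj (permRep n) : Type) := by
    haveI : Module.Finite ℤ (ZMod n →₀ ℤ) :=
      Module.Finite.equiv (Finsupp.linearEquivFunOnFinite ℤ ℤ (ZMod n)).symm
    exact Module.Finite.equiv ae.symm.toIntLinearEquiv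
  haveI hSfree : Module.Free ℤ ((Rep.equivalenceModuleMonoidAlgebra (k := ℤ)
      (G := DihedralGroup n)).functor.obj (permRep n) : Type) :=
    Module.Free.of_equiv ae.symm.toIntLinearEquiv
  have eq1 : (augKernel n : Type) ≃ₗ[MonoidAlgebra ℤ (DihedralGroup n)]
      ↥(LinearMap.ker φ.hom) := (ModuleCat.kernelIsoKer φ).toLinearEquiv
  haveI := sub_finite (G := DihedralGroup n) hSfin (LinearMap.ker φ.hom)
  haveI := sub_free (G := DihedralGroup n) hSfin hSfree (LinearMap.ker φ.hom)
  have hKfin : Module.Finite ℤ (augKernel n : Type) :=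
    Module.Finite.equiv (LinearEquiv.restrictScalars ℤ eq1).symm
  have hKfree : Module.Free ℤ (augKernel n : Type) :=
    Module.Free.of_equiv (LinearEquiv.restrictScalars ℤ eq1).symm
  exact tw_vanish (augKernel n) hKfin hKfree M u hu m

end Final
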